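/- The sequence of pseudo-squares is symmetric about Q_0: for all i ∈ ℤ, Q_i = Q_{−i}. (Theorem 4 (c); the hypothesis Q_0 ∣ 2P_{−1} of that theorem holds automatically here since Q_0 = 2.) -/
import Mathlib


/-- Two-sided continued fraction data of the normalized square root of `N`:
`N ≡ 1 (mod 4)` is positive and not a perfect square, `r = ⌊√N⌋`,
`P (-1) = r - 1` if `r` is even and `r` otherwise, `Q 0 = 2`, and the forward
(`i ≥ 0`) and backward (`i ≤ -1`) recursions (with `Int.fdiv` the floor
division on `ℤ`, so that `Int.fdiv x y = ⌊x / y⌋`). -/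
theorem stmt_7 (N : ℤ) (hNpos : 0 < N) (hN4 : N % 4 = 1) (hNsq : ¬ IsSquare N)
    (r : ℤ) (hr : r = ⌊Real.sqrt (N : ℝ)⌋)
    (P Q b : ℤ → ℤ)
    (hP1 : P (-1) = if 2 ∣ r then r - 1 else r)
    (hQ0 : Q 0 = 2)
    (hbf : ∀ i : ℤ, 0 ≤ i → b i = Int.fdiv (r + P (i - 1)) (Q i))
    (hPf : ∀ i : ℤ, 0 ≤ i → P i = b i * Q i - P (i - 1))
    (hQf : ∀ i : ℤ, 0 ≤ i → Q (i + 1) = Int.fdiv (N - P i ^ 2) (Q i))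
    (hQb : ∀ i : ℤ, i ≤ -1 → Q i = Int.fdiv (N - P i ^ 2) (Q (i + 1)))
    (hbb : ∀ i : ℤ, i ≤ -1 → b i = Int.fdiv (r + P i) (Q i))
    (hPb : ∀ i : ℤ, i ≤ -1 → P (i - 1) = b i * Q i - P i) :
    ∀ i : ℤ, Q i = Q (-i) := by
  -- base : P 0 = P (-1)
  have hP0 : P 0 = P (-1) := by
    have h1 := hPf 0 le_rfl
    have h2 := hbf 0 le_rfl
    rw [hQ0] at h1 h2
    rw [Int.fdiv_eq_ediv_of_nonneg _ (by norm_num)] at h2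
    norm_num at h1 h2
    by_cases h : (2 : ℤ) ∣ r
    · rw [if_pos h] at hP1
      omega
    · rw [if_neg h] at hP1
      omega
  -- main induction
  have key : ∀ n : ℕ, Q n = Q (-(n:ℤ)) ∧ P n = P (-(n:ℤ) - 1) := by
    intro n
    induction n with
    | zero => simpa using hP0
    | succ m ih =>
      obtain ⟨ihQ, ihP⟩ := ih
      set n : ℤ := (m : ℤ) with hn
      have hcast : ((m + 1 : ℕ) : ℤ) = n + 1 := by push_cast; ring
      rw [hcast]
      have hn0 : 0 ≤ n := by positivity
      have hQs : Q (n + 1) = Q (-(n + 1)) := by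
        have h1 := hQf n hn0
        have h2 := hQb (-n - 1) (by omega)
        have e : -n - 1 + 1 = -n := by ring
        rw [e, ← ihQ, ← ihP] at h2
        rw [h1, show -(n+1) = -n - 1 by ring, h2]
      refine ⟨hQs, ?_⟩
      have h1 := hPf (n + 1) (by omega)
      have h2 := hbf (n + 1) (by omega)
      have h3 := hPb (-n - 1) (by omega)
      have h4 := hbb (-n - 1) (by omega)
      rw [show (n:ℤ) + 1 - 1 = n from by ring] at h1 h2
      rw [show -(n:ℤ) - 1 = -(n + 1) from by ring] at h3 h4 ihP
      rw [← ihP, ← hQs] at h3 h4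
      rw [h1, h3, h2, h4]
  intro i
  rcases le_or_gt 0 i with h | h
  · have := (key i.toNat).1
    rwa [Int.toNat_of_nonneg h] at this
  · have := (key (-i).toNat).1
    rw [Int.toNat_of_nonneg (by omega), neg_neg] at this
    exact this.symm
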